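/- Let μ be an infinite cardinal and let I be a type such that: (i) the cofinality of #I is strictly greater than μ, and (ii) for every natural number n and every cardinal β < #I, (ℶ_n(max(μ, β)))⁺ < #I, where ℶ_k denotes the k-fold iterate of the power operation 2^(−) starting from the given base. Suppose that for each n ∈ ℕ, f_n is a function from the (n+1)-element finite subsets of I into a fixed type of colors of cardinality at most μ. Then there exists a sequence of colors (c_n)_{n ∈ ℕ} which is realizable for (f_n)_{n ∈ ℕ}: for every n ∈ ℕ and every cardinal β < #I there exists a subset J ⊆ I with #J ≥ β such that for every k ≤ n, f_k takes the constant value c_k on all (k+1)-element subsets of J. -/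

import Mathlib

set_option maxHeartbeats 1000000


open Cardinal

/-- The `k`-fold iterated beth number over a base cardinal `l`:
`ℶ_0(l) = l` and `ℶ_{k+1}(l) = 2 ^ ℶ_k(l)`. -/
def bethIter (l : Cardinal.{u}) : ℕ → Cardinal.{u}
  | 0 => l
  | k + 1 => 2 ^ bethIter l k

open Set

universe v w

noncomputable def pRec {W : Type v} {β : Type w} (r : W → W → Prop) (hwf : WellFounded r)
    (step : Set β → β) : W → β :=
  hwf.fix fun w ih => step {b | ∃ (w' : W) (h : r w' w), ih w' h = b}

theorem pRec_eq {W : Type v} {β : Type w} (r : W → W → Prop) (hwf : WellFounded r)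
    (step : Set β → β) (w : W) :
    pRec r hwf step w = step {b | ∃ w', r w' w ∧ pRec r hwf step w' = b} := by
  rw [pRec, hwf.fix_eq]
  congr 1
  ext b
  simp only [Set.mem_setOf_eq, exists_prop]

noncomputable def typ {α Colors : Type u} (f : Finset α → Colors) (C : Set α) (a : α) :
    {s : Finset α // ↑s ⊆ C} → Colors :=
  letI := Classical.decEq α
  fun s => f (insert a s.1)

section StepA

variable {α Colors : Type u} (f : Finset α → Colors) (A : Set α) (lam : Cardinal.{u})

/-- Witness set: a canonical realizer in `A` of the type `t` over `C`, avoiding `C`. -/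
def witSet (C : Set α) (t : {s : Finset α // ↑s ⊆ C} → Colors) : Set α :=
  {b | ∃ h : ∃ a, a ∈ A ∧ a ∉ C ∧ typ f C a = t, b = h.choose}

theorem witSet_subsingleton (C : Set α) (t : {s : Finset α // ↑s ⊆ C} → Colors) :
    (witSet f A C t).Subsingleton := by
  rintro b1 ⟨h1, rfl⟩ b2 ⟨h2, rfl⟩
  rfl

theorem witSet_subset (C : Set α) (t : {s : Finset α // ↑s ⊆ C} → Colors) :
    witSet f A C t ⊆ A := by
  rintro b ⟨h, rfl⟩
  exact h.choose_spec.1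

/-- One saturation step. -/
def Fstep (D : Set α) : Set α :=
  D ∪ ⋃ (C : {C : Set α // C ⊆ D ∧ #C ≤ lam}) (t : {s : Finset α // ↑s ⊆ C.1} → Colors),
    witSet f A C.1 t

theorem subset_Fstep (D : Set α) : D ⊆ Fstep f A lam D := subset_union_left

theorem Fstep_subset (D : Set α) : Fstep f A lam D ⊆ D ∪ A := by
  apply union_subset subset_union_left
  refine iUnion_subset fun C => iUnion_subset fun t => ?_
  exact (witSet_subset f A C.1 t).trans subset_union_right

theorem mk_finset_subsets_le {α : Type u} (C : Set α) :
    #{s : Finset α // ↑s ⊆ C} ≤ max #C ℵ₀ := by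
  classical
  have hinj : Function.Injective (fun s : {s : Finset α // ↑s ⊆ C} =>
      s.1.subtype (· ∈ C)) := by
    intro s t h
    dsimp only at h
    have hs : (s.1.subtype (· ∈ C)).map (Function.Embedding.subtype _) = s.1 := by
      rw [Finset.subtype_map, Finset.filter_true_of_mem (fun x hx => s.2 hx)]
    have ht : (t.1.subtype (· ∈ C)).map (Function.Embedding.subtype _) = t.1 := by
      rw [Finset.subtype_map, Finset.filter_true_of_mem (fun x hx => t.2 hx)]
    apply Subtype.ext
    rw [← hs, ← ht, h]
  have h1 : #{s : Finset α // ↑s ⊆ C} ≤ #(Finset C) := mk_le_of_injective hinj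
  refine h1.trans ?_
  rcases finite_or_infinite C with h | h
  · haveI := h
    haveI := Fintype.ofFinite C
    exact le_max_of_le_right (lt_aleph0_of_finite (Finset C)).le
  · haveI := h
    rw [mk_finset_of_infinite]
    exact le_max_left _ _

variable {κ : Cardinal.{u}} (hC : #Colors ≤ κ) (hkl : κ ≤ lam) (hl : ℵ₀ ≤ lam)

include hC hkl hl in
theorem mk_typSpace_le {C : Set α} (hCl : #C ≤ lam) :
    #({s : Finset α // ↑s ⊆ C} → Colors) ≤ 2 ^ lam := by
  have hX : #{s : Finset α // ↑s ⊆ C} ≤ lam :=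
    (mk_finset_subsets_le C).trans (max_le hCl hl)
  have h2 : (2 : Cardinal) ^ lam ≠ 0 := (power_pos lam two_pos).ne'
  have hlam2 : lam ≤ 2 ^ lam := (cantor lam).le
  calc #({s : Finset α // ↑s ⊆ C} → Colors) = #Colors ^ #{s : Finset α // ↑s ⊆ C} :=
        (power_def _ _).symm
    _ ≤ (2 ^ lam) ^ #{s : Finset α // ↑s ⊆ C} :=
        power_le_power_right ((hC.trans hkl).trans hlam2)
    _ ≤ (2 ^ lam) ^ lam := power_le_power_left h2 hX
    _ = 2 ^ (lam * lam) := power_mul.symm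
    _ = 2 ^ lam := by rw [mul_eq_self hl]

include hC hkl hl in
theorem mk_Fstep_le {D : Set α} (hD : #D ≤ 2 ^ lam) :
    #(Fstep f A lam D) ≤ 2 ^ lam := by
  have hlam2 : lam ≤ 2 ^ lam := (cantor lam).le
  have h20 : ℵ₀ ≤ (2:Cardinal) ^ lam := hl.trans hlam2
  have hsub : #{C : Set α // C ⊆ D ∧ #C ≤ lam} ≤ 2 ^ lam := by
    refine (mk_bounded_subset_le D lam).trans ?_
    calc max #D ℵ₀ ^ lam ≤ (2 ^ lam) ^ lam :=
          power_le_power_right (max_le hD (hl.trans hlam2))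
      _ = 2 ^ (lam * lam) := power_mul.symm
      _ = 2 ^ lam := by rw [mul_eq_self hl]
  have hU : #(⋃ (C : {C : Set α // C ⊆ D ∧ #C ≤ lam})
      (t : {s : Finset α // ↑s ⊆ C.1} → Colors), witSet f A C.1 t) ≤ 2 ^ lam := by
    refine (mk_iUnion_le _).trans ?_
    have hin : ∀ C : {C : Set α // C ⊆ D ∧ #C ≤ lam},
        #(⋃ t : {s : Finset α // ↑s ⊆ C.1} → Colors, witSet f A C.1 t) ≤ 2 ^ lam := by
      intro C
      refine (mk_iUnion_le _).trans ?_
      have h1 : ∀ t : {s : Finset α // ↑s ⊆ C.1} → Colors, #(witSet f A C.1 t) ≤ 1 :=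
        fun t => (mk_le_one_iff_set_subsingleton).2 (witSet_subsingleton f A C.1 t)
      refine le_trans (mul_le_mul' (mk_typSpace_le lam hC hkl hl C.2.2) (ciSup_le' h1)) ?_
      rw [mul_one]
    exact le_trans (mul_le_mul' hsub (ciSup_le' hin)) (le_of_eq (mul_eq_self h20))
  refine le_trans (mk_union_le _ _) ?_
  exact le_trans (add_le_add hD hU) (le_of_eq (add_eq_self h20))


/-- `B` is saturated: every type over a small subset `C` of `B` realized in `A` off `C`
is realized in `B` off `C`. -/
def Sat (f : Finset α → Colors) (A B : Set α) (lam : Cardinal.{u}) : Prop :=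
  ∀ C : Set α, C ⊆ B → #C ≤ lam → ∀ a ∈ A, a ∉ C →
    ∃ b ∈ B, b ∉ C ∧ typ f C b = typ f C a

noncomputable def satChain : (Order.succ lam).ord.ToType → Set α :=
  pRec (· < ·) (IsWellFounded.wf) (fun P => Fstep f A lam (⋃₀ P))

theorem satChain_eq (w : (Order.succ lam).ord.ToType) :
    satChain f A lam w =
      Fstep f A lam (⋃₀ {B | ∃ w', w' < w ∧ satChain f A lam w' = B}) :=
  pRec_eq _ _ _ w

theorem satChain_prior_eq (w : (Order.succ lam).ord.ToType) :
    {B | ∃ w', w' < w ∧ satChain f A lam w' = B} = satChain f A lam '' (Iio w) := by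
  ext B
  simp [Set.mem_image, Set.mem_Iio, eq_comm]

theorem satChain_mono {w w' : (Order.succ lam).ord.ToType} (h : w' < w) :
    satChain f A lam w' ⊆ satChain f A lam w := by
  rw [satChain_eq f A lam w]
  refine subset_trans ?_ (subset_Fstep f A lam _)
  exact subset_sUnion_of_mem ⟨w', h, rfl⟩

theorem satChain_subset (hA : A.Nonempty) : ∀ w, satChain f A lam w ⊆ A := by
  intro w
  induction w using (IsWellFounded.wf (r := ((· < ·) : (Order.succ lam).ord.ToType → _ → Prop))).induction with
  | _ w ih =>
    rw [satChain_eq f A lam w]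
    refine (Fstep_subset f A lam _).trans (union_subset ?_ subset_rfl)
    refine sUnion_subset ?_
    rintro B ⟨w', hw', rfl⟩
    exact ih w' hw'

include hC hkl hl in
theorem mk_satChain_le : ∀ w, #(satChain f A lam w) ≤ 2 ^ lam := by
  intro w
  induction w using (IsWellFounded.wf (r := ((· < ·) : (Order.succ lam).ord.ToType → _ → Prop))).induction with
  | _ w ih =>
    rw [satChain_eq f A lam w]
    refine mk_Fstep_le f A lam hC hkl hl ?_
    rw [satChain_prior_eq]
    refine le_trans (mk_sUnion_le _) ?_
    have h1 : #(satChain f A lam '' (Iio w)) ≤ lam := by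
      refine le_trans mk_image_le ?_
      have := mk_Iio_ord_toType w
      exact Order.lt_succ_iff.mp this
    have h2 : ⨆ s : (satChain f A lam '' (Iio w) : Set (Set α)), #s ≤ 2 ^ lam := by
      refine ciSup_le' ?_
      rintro ⟨B, hB⟩
      obtain ⟨w', hw', rfl⟩ := hB
      exact ih w' hw'
    refine le_trans (mul_le_mul' (h1.trans (cantor lam).le) h2) ?_
    exact le_of_eq (mul_eq_self (hl.trans (cantor lam).le))

include hC hkl hl in
theorem exists_sat (hA : A.Nonempty) :
    ∃ B : Set α, B ⊆ A ∧ #B ≤ 2 ^ lam ∧ Sat f A B lam := by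
  classical
  refine ⟨⋃ w : (Order.succ lam).ord.ToType, satChain f A lam w, ?_, ?_, ?_⟩
  · exact iUnion_subset fun w => satChain_subset f A lam hA w
  · refine le_trans (mk_iUnion_le _) ?_
    have h1 : #(Order.succ lam).ord.ToType ≤ 2 ^ lam := by
      rw [mk_ord_toType]
      exact Order.succ_le_of_lt (cantor lam)
    have h2 : ⨆ w : (Order.succ lam).ord.ToType, #(satChain f A lam w) ≤ 2 ^ lam :=
      ciSup_le' fun w => mk_satChain_le f A lam hC hkl hl w
    exact le_trans (mul_le_mul' h1 h2) (le_of_eq (mul_eq_self (hl.trans (cantor lam).le)))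
  · intro C hCB hClam a ha haC
    -- find a stage bounding all elements of C
    have hidx : ∀ c : C, ∃ w : (Order.succ lam).ord.ToType, (c : α) ∈ satChain f A lam w := by
      intro c
      have := hCB c.2
      exact mem_iUnion.mp this
    choose idx hidx' using hidx
    haveI : IsWellOrder (Order.succ lam).ord.ToType (· < ·) := isWellOrder_lt
    have hlt : #(Set.range idx) <
        (Ordinal.type ((· < ·) : (Order.succ lam).ord.ToType → (Order.succ lam).ord.ToType → Prop)).cof := by
      rw [Ordinal.type_toType, (Cardinal.isRegular_succ hl).cof_eq]
      exact lt_of_le_of_lt (mk_range_le.trans hClam) (Order.lt_succ lam)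
    have hbd : ∃ wstar, ∀ b ∈ Set.range idx, b < wstar := by
      have hnc : ¬ IsCofinal (Set.range idx) := fun hc => (Order.cof_le hc).not_gt (by simpa using hlt)
      rw [IsCofinal] at hnc
      push_neg at hnc
      exact hnc
    obtain ⟨wstar, hwstar⟩ := hbd
    set D := ⋃₀ {B | ∃ w', w' < wstar ∧ satChain f A lam w' = B} with hD
    have hCD : C ⊆ D := by
      intro c hc
      refine ⟨satChain f A lam (idx ⟨c, hc⟩), ⟨idx ⟨c, hc⟩, ?_, rfl⟩, hidx' ⟨c, hc⟩⟩
      exact hwstar _ (mem_range_self _)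
    have hex : ∃ a', a' ∈ A ∧ a' ∉ C ∧ typ f C a' = typ f C a := ⟨a, ha, haC, rfl⟩
    set b := hex.choose with hb
    have hbspec := hex.choose_spec
    have hbmem : b ∈ satChain f A lam wstar := by
      rw [satChain_eq f A lam wstar]
      refine Or.inr ?_
      refine mem_iUnion.mpr ⟨⟨C, hCD, hClam⟩, ?_⟩
      exact mem_iUnion.mpr ⟨typ f C a, ⟨hex, rfl⟩⟩
    exact ⟨b, mem_iUnion.mpr ⟨wstar, hbmem⟩, hbspec.2.1, hbspec.2.2⟩

end StepA

section StepB

variable {α Colors : Type u} (f : Finset α → Colors) (B : Set α) (astar : α)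
  (lam : Cardinal.{u})

def goodSet (P : Set α) : Set α :=
  {b | b ∈ B ∧ b ∉ P ∧ typ f P b = typ f P astar}

noncomputable def stepB : Set α → α := fun P =>
  letI := Classical.dec (goodSet f B astar P).Nonempty
  if h : (goodSet f B astar P).Nonempty then h.choose else astar

noncomputable def endSeq : (Order.succ lam).ord.ToType → α :=
  pRec (· < ·) IsWellFounded.wf (stepB f B astar)

def priorB (w : (Order.succ lam).ord.ToType) : Set α :=
  {b | ∃ w', w' < w ∧ endSeq f B astar lam w' = b}

theorem endSeq_eq (w : (Order.succ lam).ord.ToType) :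
    endSeq f B astar lam w = stepB f B astar (priorB f B astar lam w) :=
  pRec_eq _ _ _ w

theorem priorB_eq_image (w : (Order.succ lam).ord.ToType) :
    priorB f B astar lam w = endSeq f B astar lam '' (Iio w) := by
  ext b
  simp [priorB, Set.mem_image, Set.mem_Iio]

theorem endSeq_mem {A : Set α} (hl : ℵ₀ ≤ lam) (hBsat : Sat f A B lam)
    (hastarA : astar ∈ A) (hastarB : astar ∉ B) :
    ∀ w, endSeq f B astar lam w ∈ goodSet f B astar (priorB f B astar lam w) := by
  intro w
  induction w using (IsWellFounded.wf
      (r := ((· < ·) : (Order.succ lam).ord.ToType → _ → Prop))).induction with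
  | _ w ihw =>
    have hCB : priorB f B astar lam w ⊆ B := by
      rintro b ⟨w', hw', rfl⟩
      exact (ihw w' hw').1
    have hCcard : #(priorB f B astar lam w) ≤ lam := by
      rw [priorB_eq_image]
      exact mk_image_le.trans (Order.lt_succ_iff.mp (mk_Iio_ord_toType w))
    have hastarC : astar ∉ priorB f B astar lam w := fun hc => hastarB (hCB hc)
    obtain ⟨b, hbB, hbC, hbty⟩ :=
      hBsat (priorB f B astar lam w) hCB hCcard astar hastarA hastarC
    have hne : (goodSet f B astar (priorB f B astar lam w)).Nonempty := ⟨b, hbB, hbC, hbty⟩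
    rw [endSeq_eq f B astar lam w, stepB, dif_pos hne]
    exact hne.choose_spec

theorem endSeq_inj {A : Set α} (hl : ℵ₀ ≤ lam) (hBsat : Sat f A B lam)
    (hastarA : astar ∈ A) (hastarB : astar ∉ B) :
    Function.Injective (endSeq f B astar lam) := by
  intro w w' h
  by_contra hne
  rcases Ne.lt_or_gt hne with hlt | hlt
  · exact (endSeq_mem f B astar lam hl hBsat hastarA hastarB w').2.1 ⟨w, hlt, h⟩
  · exact (endSeq_mem f B astar lam hl hBsat hastarA hastarB w).2.1 ⟨w', hlt, h.symm⟩

end StepB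

theorem le_bethIter (κ : Cardinal.{u}) : ∀ n, κ ≤ bethIter κ n
  | 0 => le_rfl
  | n + 1 => (le_bethIter κ n).trans (cantor _).le

theorem typ_apply' {α Colors : Type u} (f : Finset α → Colors) (C : Set α) (a : α)
    [DecidableEq α] (s : {s : Finset α // ↑s ⊆ C}) :
    typ f C a s = f (insert a s.1) := by
  unfold typ
  congr 1
  congr!

theorem erdosRado (κ : Cardinal.{u}) (hκ0 : ℵ₀ ≤ κ) {Colors : Type u} (hCol : #Colors ≤ κ) :
    ∀ (n : ℕ) {α : Type u} (A : Set α) (f : Finset α → Colors),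
      Order.succ (bethIter κ n) ≤ #A →
      ∃ (H : Set α) (c : Colors), H ⊆ A ∧ κ < #H ∧
        ∀ s : Finset α, ↑s ⊆ H → s.card = n + 1 → f s = c := by
  intro n
  induction n with
  | zero =>
    intro α A f hA
    classical
    have hfib : ∃ c : Colors, κ < #{a : α | a ∈ A ∧ f {a} = c} := by
      by_contra hcon
      push_neg at hcon
      have hsub : A ⊆ ⋃ c : Colors, {a : α | a ∈ A ∧ f {a} = c} := fun a ha =>
        mem_iUnion.mpr ⟨f {a}, ha, rfl⟩
      have h1 : #A ≤ #Colors * ⨆ c, #{a : α | a ∈ A ∧ f {a} = c} :=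
        (mk_le_mk_of_subset hsub).trans (mk_iUnion_le _)
      have h2 : #A ≤ κ := h1.trans (le_trans (mul_le_mul' hCol (ciSup_le' hcon))
        (le_of_eq (mul_eq_self hκ0)))
      have h3 : κ < #A := lt_of_lt_of_le (Order.lt_succ κ) hA
      exact absurd h2 (not_le.mpr h3)
    obtain ⟨c, hc⟩ := hfib
    refine ⟨{a : α | a ∈ A ∧ f {a} = c}, c, fun a ha => ha.1, hc, ?_⟩
    intro s hs hcard
    obtain ⟨a, rfl⟩ := Finset.card_eq_one.mp hcard
    exact (hs (Finset.mem_singleton_self a)).2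
  | succ n ih =>
    intro α A f hA
    classical
    set lam := bethIter κ n with hlam
    have hl : ℵ₀ ≤ lam := hκ0.trans (le_bethIter κ n)
    have hkl : κ ≤ lam := le_bethIter κ n
    have hA2 : Order.succ (2 ^ lam) ≤ #A := hA
    have hAlt : (2 : Cardinal) ^ lam < #A := lt_of_lt_of_le (Order.lt_succ _) hA2
    have hAne : A.Nonempty := by
      rw [← Set.nonempty_coe_sort, ← Cardinal.mk_ne_zero_iff]
      intro h0
      rw [h0] at hAlt
      exact absurd hAlt (not_lt.mpr (zero_le))
    obtain ⟨B, hBA, hBcard, hBsat⟩ := exists_sat f A lam hCol hkl hl hAne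
    have hex : ∃ a, a ∈ A ∧ a ∉ B := by
      by_contra h
      push_neg at h
      exact absurd ((mk_le_mk_of_subset h).trans hBcard) (not_le.mpr hAlt)
    obtain ⟨astar, hastarA, hastarB⟩ := hex
    have hkey := endSeq_mem f B astar lam hl hBsat hastarA hastarB
    have hinj := endSeq_inj f B astar lam hl hBsat hastarA hastarB
    set X := Set.range (endSeq f B astar lam) with hXdef
    have hXB : X ⊆ B := by
      rintro x ⟨w, rfl⟩
      exact (hkey w).1
    have hXcard : #X = Order.succ lam := by
      rw [hXdef, mk_range_eq _ hinj, mk_ord_toType]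
    obtain ⟨H, c, hHX, hκH, hconst⟩ := ih X (fun s => f (insert astar s)) (le_of_eq hXcard.symm)
    refine ⟨H, c, (hHX.trans hXB).trans hBA, hκH, ?_⟩
    intro s hs hcard
    have hsX : ↑s ⊆ X := fun x hx => hHX (hs hx)
    have hmem : ∀ x : {x // x ∈ s}, ∃ w, endSeq f B astar lam w = x.1 := fun x =>
      Set.mem_range.mp (hsX x.2)
    choose φ hφ using hmem
    have hsne : s.Nonempty := Finset.card_pos.mp (by rw [hcard]; exact Nat.succ_pos _)
    have hTne : (s.attach.image φ).Nonempty :=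
      (Finset.attach_nonempty_iff.mpr hsne).image φ
    set w₀ := (s.attach.image φ).max' hTne with hw₀def
    obtain ⟨x₀s, hx₀s, hw₀⟩ := Finset.mem_image.mp ((s.attach.image φ).max'_mem hTne)
    have hx0 : endSeq f B astar lam w₀ = x₀s.1 := by rw [hw₀def, ← hw₀]; exact hφ x₀s
    have hx₀mem : x₀s.1 ∈ s := x₀s.2
    set s' := s.erase x₀s.1 with hs'def
    have hs'card : s'.card = n + 1 := by
      rw [hs'def, Finset.card_erase_of_mem hx₀mem, hcard]
      omega
    have hs'prior : ↑s' ⊆ priorB f B astar lam w₀ := by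
      intro y hy
      have hys : y ∈ s := Finset.mem_of_mem_erase hy
      refine ⟨φ ⟨y, hys⟩, ?_, hφ _⟩
      have hle : φ ⟨y, hys⟩ ≤ w₀ :=
        (s.attach.image φ).le_max' _ (Finset.mem_image_of_mem φ (Finset.mem_attach s ⟨y, hys⟩))
      refine lt_of_le_of_ne hle fun heq => Finset.ne_of_mem_erase hy ?_
      have hyy : endSeq f B astar lam (φ ⟨y, hys⟩) = y := hφ ⟨y, hys⟩
      rw [heq, hx0] at hyy
      exact hyy.symm
    have hty := congrFun (hkey w₀).2.2 ⟨s', hs'prior⟩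
    rw [typ_apply', typ_apply'] at hty
    have h1 : f s = f (insert (endSeq f B astar lam w₀) s') := by
      rw [hx0, Finset.insert_erase hx₀mem]
    have h2 : f (insert astar s') = c := hconst s' (fun x hx => hs (Finset.mem_of_mem_erase hx)) hs'card
    rw [h1, hty, h2]

section Main

variable {I Colors : Type u} (f : ∀ n : ℕ, {s : Finset I // s.card = n + 1} → Colors)

/-- `c` is a good partial color sequence at level `n`. -/
def GoodN (n : ℕ) (c : ℕ → Colors) : Prop :=
  ∀ β : Cardinal.{u}, β < #I → ∃ J : Set I, β ≤ #J ∧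
    ∀ k < n, ∀ s : {s : Finset I // s.card = k + 1}, ↑s.1 ⊆ J → f k s = c k

theorem goodN_zero (hI : (1 : Cardinal) ≤ #I → True) (c : ℕ → Colors) : GoodN f 0 c :=
  fun β hβ => ⟨Set.univ, by rw [mk_univ]; exact hβ.le, fun k hk => absurd hk (Nat.not_lt_zero k)⟩

variable {μ : Cardinal.{u}} (hμ : ℵ₀ ≤ μ) (hcf : μ < (#I).ord.cof)
  (hbeth : ∀ (n : ℕ) (β : Cardinal.{u}), β < #I →
      Order.succ (bethIter (max μ β) n) < #I)
  (hC : #Colors ≤ μ)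

include hμ hcf hbeth hC in
theorem goodN_ext (d₀ : Colors) (n : ℕ) (c : ℕ → Colors) (hGood : GoodN f n c) :
    ∃ d, GoodN f (n + 1) (Function.update c n d) := by
  classical
  set ftot : Finset I → Colors :=
    fun s => if h : s.card = n + 1 then f n ⟨s, h⟩ else d₀ with hftot
  set Q : Colors → Cardinal.{u} → Prop := fun d β =>
    ∃ J : Set I, β ≤ #J ∧
      (∀ k < n, ∀ s : {s : Finset I // s.card = k + 1}, ↑s.1 ⊆ J → f k s = c k) ∧
      ∀ s : {s : Finset I // s.card = n + 1}, ↑s.1 ⊆ J → f n s = d with hQdef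
  have hQmono : ∀ d β β', β' ≤ β → Q d β → Q d β' := by
    rintro d β β' hle ⟨J, hJ, h1, h2⟩
    exact ⟨J, hle.trans hJ, h1, h2⟩
  have hQex : ∀ β, β < #I → ∃ d, Q d β := by
    intro β hβ
    have hκ0 : ℵ₀ ≤ max μ β := hμ.trans (le_max_left _ _)
    have hδ : Order.succ (bethIter (max μ β) n) < #I := hbeth n β hβ
    obtain ⟨J, hJcard, hJconst⟩ := hGood (Order.succ (bethIter (max μ β) n)) hδ
    have hCol : #Colors ≤ max μ β := hC.trans (le_max_left _ _)
    obtain ⟨H, d, hHJ, hκH, hconst⟩ := erdosRado (max μ β) hκ0 hCol n J ftot hJcard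
    refine ⟨d, H, ?_, ?_, ?_⟩
    · exact le_of_lt (lt_of_le_of_lt (le_max_right μ β) hκH)
    · intro k hk s hsub
      exact hJconst k hk s (fun x hx => hHJ (hsub hx))
    · intro s hsub
      have h := hconst s.1 hsub s.2
      dsimp only [ftot] at h
      rw [dif_pos s.2] at h
      exact h
  have hpig : ∃ d, ∀ β, β < #I → Q d β := by
    by_contra hcon
    push_neg at hcon
    choose βf hβf1 hβf2 using hcon
    have hγ : (⨆ d, βf d) < #I := Ordinal.iSup_lt (lt_of_le_of_lt hC hcf) hβf1
    obtain ⟨d, hd⟩ := hQex _ hγ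
    exact hβf2 d (hQmono d _ _ (le_ciSup (Cardinal.bddAbove_range _) d) hd)
  obtain ⟨d, hd⟩ := hpig
  refine ⟨d, ?_⟩
  intro β hβ
  obtain ⟨J, hJ, h1, h2⟩ := hd β hβ
  refine ⟨J, hJ, ?_⟩
  intro k hk s hsub
  rcases Nat.lt_succ_iff_lt_or_eq.mp hk with hk' | rfl
  · rw [Function.update_of_ne (Nat.ne_of_lt hk')]
    exact h1 k hk' s hsub
  · rw [Function.update_self]
    exact h2 s hsub

end Main

theorem exists_realizable_sequence' (μ : Cardinal.{u}) (hμ : ℵ₀ ≤ μ)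
    (I : Type u) (hcf : μ < (#I).ord.cof)
    (hbeth : ∀ (n : ℕ) (β : Cardinal.{u}), β < #I →
      Order.succ (bethIter (max μ β) n) < #I)
    (Colors : Type u) (hC : #Colors ≤ μ)
    (f : ∀ n : ℕ, {s : Finset I // s.card = n + 1} → Colors) :
    ∃ c : ℕ → Colors, ∀ n : ℕ, ∀ β : Cardinal.{u}, β < #I →
      ∃ J : Set I, β ≤ #J ∧
        ∀ k ≤ n, ∀ s : {s : Finset I // s.card = k + 1},
          ↑s.1 ⊆ J → f k s = c k := by
  classical
  have hI0 : #I ≠ 0 := by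
    intro h0
    rw [h0, ord_zero, Ordinal.cof_zero] at hcf
    exact absurd hcf (not_lt.mpr (zero_le (a := μ)))
  obtain ⟨i₀⟩ : Nonempty I := mk_ne_zero_iff.mp hI0
  let c₀ : Colors := f 0 ⟨{i₀}, Finset.card_singleton i₀⟩
  let F : ∀ n : ℕ, {c : ℕ → Colors // GoodN f n c} := fun n =>
    Nat.rec ⟨fun _ => c₀, goodN_zero f (fun _ => trivial) _⟩
      (fun m p => ⟨Function.update p.1 m
          (goodN_ext f hμ hcf hbeth hC c₀ m p.1 p.2).choose,
        (goodN_ext f hμ hcf hbeth hC c₀ m p.1 p.2).choose_spec⟩) n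
  have hFsucc : ∀ m, (F (m + 1)).1 = Function.update (F m).1 m
      (goodN_ext f hμ hcf hbeth hC c₀ m (F m).1 (F m).2).choose := fun m => rfl
  have hagree : ∀ m k, k < m → (F m).1 k = (F (k + 1)).1 k := by
    intro m
    induction m with
    | zero => intro k hk; exact absurd hk (Nat.not_lt_zero k)
    | succ m ihm =>
      intro k hk
      rcases Nat.lt_succ_iff_lt_or_eq.mp hk with h | rfl
      · rw [hFsucc m, Function.update_of_ne (by omega)]
        exact ihm k h
      · rfl
  refine ⟨fun k => (F (k + 1)).1 k, ?_⟩
  intro n β hβ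
  obtain ⟨J, hJ, hconst⟩ := (F (n + 1)).2 β hβ
  refine ⟨J, hJ, ?_⟩
  intro k hk s hsub
  have h1 := hconst k (Nat.lt_succ_of_le hk) s hsub
  rw [h1, hagree (n + 1) k (Nat.lt_succ_of_le hk)]

/-- If `μ` is infinite, `cf(#I) > μ`, and for every `n` and every `β < #I` one
has `(ℶ_n(max μ β))⁺ < #I`, then any sequence of colorings `f n` of the
`(n+1)`-element subsets of `I` with at most `μ` colors admits a realizable
sequence of colors `(c n)`: for every `n` and every `β < #I` there is `J ⊆ I`
with `#J ≥ β` on whose `(k+1)`-element subsets `f k` is constant with value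
`c k`, for all `k ≤ n`. -/
theorem exists_realizable_sequence (μ : Cardinal.{u}) (hμ : ℵ₀ ≤ μ)
    (I : Type u) (hcf : μ < (#I).ord.cof)
    (hbeth : ∀ (n : ℕ) (β : Cardinal.{u}), β < #I →
      Order.succ (bethIter (max μ β) n) < #I)
    (Colors : Type u) (hC : #Colors ≤ μ)
    (f : ∀ n : ℕ, {s : Finset I // s.card = n + 1} → Colors) :
    ∃ c : ℕ → Colors, ∀ n : ℕ, ∀ β : Cardinal.{u}, β < #I →
      ∃ J : Set I, β ≤ #J ∧
        ∀ k ≤ n, ∀ s : {s : Finset I // s.card = k + 1},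
          ↑s.1 ⊆ J → f k s = c k :=
  exists_realizable_sequence' μ hμ I hcf hbeth Colors hC f
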